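/- The decoupled InfoNCE loss upper-bounds the linear kernel contrastive loss (Proposition G.1, inequality (7.1)): For every measurable f : X → S^{d−1}, every τ > 0, λ ≥ 0 and integer M ≥ 1, τ^{−1}·L_LinKCL(f;λ) ≤ L̃_NCE(f;τ,λ) + λ·log(1/M), where L̃_NCE(f;τ,λ) := −E_{(x,x⁺)}[f(x)⊤f(x⁺)/τ] + λ·E_{(x,x⁺),x_1⁻,…,x_M⁻}[ log( e^{f(x)⊤f(x⁺)/τ} + Σ_{i=1}^M e^{f(x)⊤f(x_i⁻)/τ} ) ]. In particular, taking λ = 1 yields τ^{−1}·L_LinKCL(f;1) ≤ L_NCE(f;τ) + log(1/M) for the InfoNCE loss. -/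

import Mathlib

open MeasureTheory
open scoped RealInnerProductSpace

private lemma integrable_of_bdd' {α : Type*} [MeasurableSpace α] {μ : Measure α}
    [IsProbabilityMeasure μ] {g : α → ℝ} (hg : Measurable g) {C : ℝ}
    (hC : ∀ x, |g x| ≤ C) : Integrable g μ :=
  (integrable_const C).mono' hg.aestronglyMeasurable
    (Filter.Eventually.of_forall fun x => by simpa using hC x)


/-- **The decoupled InfoNCE loss upper-bounds the linear kernel contrastive loss
(Proposition G.1, inequality (7.1)).** For every measurable `f : X → S^{d−1}`, `τ > 0`,
`λ ≥ 0` and integer `M ≥ 1`,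
`τ⁻¹·L_LinKCL(f;λ) ≤ L̃_NCE(f;τ,λ) + λ·log(1/M)`, where
`L̃_NCE(f;τ,λ) := −E_{(x,x⁺)}[f(x)⊤f(x⁺)/τ]
  + λ·E[ log( e^{f(x)⊤f(x⁺)/τ} + Σ_{i=1}^M e^{f(x)⊤f(xᵢ⁻)/τ} ) ]` with `(x,x⁺) ∼ P₊` and
`x₁⁻,…,x_M⁻` i.i.d. `P_X` independent of `(x,x⁺)`, and
`L_LinKCL(f;λ) := −E_{(x,x⁺)}[f(x)⊤f(x⁺)] + λ·E_{(x,x⁻)}[f(x)⊤f(x⁻)]`.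
In particular, taking `λ = 1` yields `τ⁻¹·L_LinKCL(f;1) ≤ L_NCE(f;τ) + log(1/M)` for the
InfoNCE loss. -/
theorem decoupled_infonce_upper_bounds_linear_kcl
    {X : Type*} [MeasurableSpace X] {d : ℕ}
    (PX : Measure X) [IsProbabilityMeasure PX]
    (Pplus : Measure (X × X)) [IsProbabilityMeasure Pplus]
    (hfst : Pplus.map Prod.fst = PX) (hsnd : Pplus.map Prod.snd = PX)
    (f : X → EuclideanSpace ℝ (Fin d)) (hf : Measurable f) (hfs : ∀ x, ‖f x‖ = 1)
    (τ lam : ℝ) (hτ : 0 < τ) (hlam : 0 ≤ lam) (M : ℕ) (hM : 1 ≤ M) :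
    (τ⁻¹ * (-(∫ p, (⟪f p.1, f p.2⟫ : ℝ) ∂Pplus)
        + lam * ∫ p, (⟪f p.1, f p.2⟫ : ℝ) ∂(PX.prod PX)) ≤
      (-(∫ p, (⟪f p.1, f p.2⟫ : ℝ) / τ ∂Pplus)
        + lam * ∫ q, Real.log (Real.exp ((⟪f q.1.1, f q.1.2⟫ : ℝ) / τ)
            + ∑ i : Fin M, Real.exp ((⟪f q.1.1, f (q.2 i)⟫ : ℝ) / τ))
          ∂(Pplus.prod (Measure.pi fun _ : Fin M => PX)))
        + lam * Real.log (1 / M)) ∧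
    (τ⁻¹ * (-(∫ p, (⟪f p.1, f p.2⟫ : ℝ) ∂Pplus)
        + 1 * ∫ p, (⟪f p.1, f p.2⟫ : ℝ) ∂(PX.prod PX)) ≤
      -(∫ q, Real.log (Real.exp ((⟪f q.1.1, f q.1.2⟫ : ℝ) / τ) /
            (Real.exp ((⟪f q.1.1, f q.1.2⟫ : ℝ) / τ)
              + ∑ i : Fin M, Real.exp ((⟪f q.1.1, f (q.2 i)⟫ : ℝ) / τ)))
          ∂(Pplus.prod (Measure.pi fun _ : Fin M => PX)))
        + Real.log (1 / M)) := by
  classical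
  set ν : Measure (Fin M → X) := Measure.pi fun _ : Fin M => PX with hν
  set μ : Measure ((X × X) × (Fin M → X)) := Pplus.prod ν with hμdef
  have hνP : IsProbabilityMeasure ν := by infer_instance
  have hμP : IsProbabilityMeasure μ := by infer_instance
  have hMpos : (0 : ℝ) < M := by exact_mod_cast hM
  have hMne : (M : ℝ) ≠ 0 := ne_of_gt hMpos
  -- basic facts about the inner product
  have hbound : ∀ a b : X, |(⟪f a, f b⟫ : ℝ)| ≤ 1 := fun a b => by
    have := abs_real_inner_le_norm (f a) (f b)
    simpa [hfs] using this
  have hmeas : Measurable fun p : X × X => (⟪f p.1, f p.2⟫ : ℝ) :=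
    (hf.comp measurable_fst).inner (hf.comp measurable_snd)
  set A : ℝ := ∫ p, (⟪f p.1, f p.2⟫ : ℝ) ∂Pplus with hA
  set B : ℝ := ∫ p, (⟪f p.1, f p.2⟫ : ℝ) ∂(PX.prod PX) with hB
  -- the "denominator" and log terms
  set D : ((X × X) × (Fin M → X)) → ℝ := fun q =>
    Real.exp ((⟪f q.1.1, f q.1.2⟫ : ℝ) / τ)
      + ∑ i : Fin M, Real.exp ((⟪f q.1.1, f (q.2 i)⟫ : ℝ) / τ) with hD
  have hDpos : ∀ q, 0 < D q := fun q => by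
    have h1 : (0:ℝ) < Real.exp ((⟪f q.1.1, f q.1.2⟫ : ℝ) / τ) := Real.exp_pos _
    have h2 : (0:ℝ) ≤ ∑ i : Fin M, Real.exp ((⟪f q.1.1, f (q.2 i)⟫ : ℝ) / τ) :=
      Finset.sum_nonneg fun i _ => (Real.exp_pos _).le
    exact add_pos_of_pos_of_nonneg h1 h2
  have hmeasD : Measurable D := by
    apply Measurable.add
    · exact ((hmeas.comp measurable_fst).div_const τ).exp
    · exact Finset.measurable_sum _ fun i _ =>
        (((hf.comp (measurable_fst.comp measurable_fst)).inner
          (hf.comp ((measurable_pi_apply i).comp measurable_snd))).div_const τ).exp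
  have hmeasg : Measurable fun q => Real.log (D q) := Real.measurable_log.comp hmeasD
  -- integrability of the log term
  have hIntg : Integrable (fun q => Real.log (D q)) μ := by
    apply integrable_of_bdd' hmeasg (C := Real.log (M + 1) + τ⁻¹)
    intro q
    rw [abs_le]
    constructor
    · have h1 : Real.exp (-τ⁻¹) ≤ D q := by
        have : -τ⁻¹ ≤ (⟪f q.1.1, f q.1.2⟫ : ℝ) / τ := by
          have := (abs_le.1 (hbound q.1.1 q.1.2)).1
          rw [neg_le, ← neg_div]
          rw [div_le_iff₀ hτ, inv_mul_cancel₀ (ne_of_gt hτ)]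
          linarith
        calc Real.exp (-τ⁻¹) ≤ Real.exp ((⟪f q.1.1, f q.1.2⟫ : ℝ) / τ) := Real.exp_le_exp.2 this
          _ ≤ D q := le_add_of_nonneg_right (Finset.sum_nonneg fun i _ => (Real.exp_pos _).le)
      have := Real.log_le_log (Real.exp_pos _) h1
      rw [Real.log_exp] at this
      have hlogM : (0:ℝ) ≤ Real.log (M + 1) := Real.log_nonneg (by linarith)
      linarith
    · have h2 : D q ≤ (M + 1) * Real.exp τ⁻¹ := by
        have hb : ∀ a b : X, Real.exp ((⟪f a, f b⟫ : ℝ) / τ) ≤ Real.exp τ⁻¹ := by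
          intro a b
          apply Real.exp_le_exp.2
          have := (abs_le.1 (hbound a b)).2
          rw [div_le_iff₀ hτ, inv_mul_cancel₀ (ne_of_gt hτ)]
          linarith
        have hsum : ∑ i : Fin M, Real.exp ((⟪f q.1.1, f (q.2 i)⟫ : ℝ) / τ)
            ≤ (M : ℝ) * Real.exp τ⁻¹ := by
          calc ∑ i : Fin M, Real.exp ((⟪f q.1.1, f (q.2 i)⟫ : ℝ) / τ)
              ≤ ∑ _i : Fin M, Real.exp τ⁻¹ := Finset.sum_le_sum fun i _ => hb _ _
            _ = (M : ℝ) * Real.exp τ⁻¹ := by simp [mul_comm]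
        have := hb q.1.1 q.1.2
        simp only [hD]
        nlinarith [Real.exp_pos (τ:ℝ)⁻¹]
      calc Real.log (D q) ≤ Real.log ((M + 1) * Real.exp τ⁻¹) :=
            Real.log_le_log (hDpos q) h2
        _ = Real.log (M + 1) + τ⁻¹ := by
            rw [Real.log_mul (by positivity) (Real.exp_ne_zero _), Real.log_exp]
  -- integrability of individual inner-product terms on μ
  have hmeasI : ∀ i : Fin M, Measurable fun q : (X × X) × (Fin M → X) =>
      (⟪f q.1.1, f (q.2 i)⟫ : ℝ) := fun i =>
    (hf.comp (measurable_fst.comp measurable_fst)).inner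
      (hf.comp ((measurable_pi_apply i).comp measurable_snd))
  have hIntI : ∀ i : Fin M, Integrable
      (fun q : (X × X) × (Fin M → X) => (⟪f q.1.1, f (q.2 i)⟫ : ℝ)) μ := fun i =>
    integrable_of_bdd' (hmeasI i) (C := 1) fun q => hbound _ _
  have hIntpos : Integrable (fun q : (X × X) × (Fin M → X) =>
      (⟪f q.1.1, f q.1.2⟫ : ℝ) / τ) μ := by
    apply integrable_of_bdd' ((hmeas.comp measurable_fst).div_const τ) (C := τ⁻¹)
    intro q
    rw [abs_div, abs_of_pos hτ, div_le_iff₀ hτ, inv_mul_cancel₀ (ne_of_gt hτ)]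
    exact hbound _ _
  -- marginal computations
  have hevalmap : ∀ i : Fin M, ν.map (fun y => y i) = PX := by
    intro i
    ext s hs
    rw [Measure.map_apply (measurable_pi_apply i) hs]
    have h1 : (fun y : Fin M → X => y i) ⁻¹' s
        = Set.pi Set.univ (Function.update (fun _ => Set.univ) i s) := Set.eval_preimage
    rw [hν, h1, Measure.pi_pi]
    rw [Finset.prod_eq_single i (fun j _ hj => by simp [Function.update_of_ne hj])
      (fun h => absurd (Finset.mem_univ i) h)]
    simp
  have hpairmap : ∀ i : Fin M,
      μ.map (fun q : (X × X) × (Fin M → X) => (q.1.1, q.2 i)) = PX.prod PX := by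
    intro i
    have h1 : (fun q : (X × X) × (Fin M → X) => (q.1.1, q.2 i))
        = Prod.map Prod.fst (fun y => y i) := rfl
    rw [hμdef, h1, ← Measure.map_prod_map _ _ measurable_fst (measurable_pi_apply i),
      hfst, hevalmap i]
  have hIeq : ∀ i : Fin M,
      ∫ q, (⟪f q.1.1, f (q.2 i)⟫ : ℝ) ∂μ = B := by
    intro i
    have hφ : Measurable fun q : (X × X) × (Fin M → X) => (q.1.1, q.2 i) :=
      (measurable_fst.comp measurable_fst).prodMk ((measurable_pi_apply i).comp measurable_snd)
    have := MeasureTheory.integral_map (φ := fun q : (X × X) × (Fin M → X) => (q.1.1, q.2 i))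
      (μ := μ) hφ.aemeasurable (f := fun p : X × X => (⟪f p.1, f p.2⟫ : ℝ))
      (by rw [hpairmap i]; exact hmeas.aestronglyMeasurable)
    rw [hpairmap i] at this
    rw [hB, ← this]
  -- pointwise Jensen inequality
  have hpt : ∀ q : (X × X) × (Fin M → X),
      (M : ℝ)⁻¹ * ∑ i : Fin M, (⟪f q.1.1, f (q.2 i)⟫ : ℝ) / τ
        ≤ Real.log (D q) + Real.log (1 / M) := by
    intro q
    set e : Fin M → ℝ := fun i => Real.exp ((⟪f q.1.1, f (q.2 i)⟫ : ℝ) / τ) with he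
    have hJ := (strictConcaveOn_log_Ioi.concaveOn).le_map_sum
      (t := Finset.univ) (w := fun _ : Fin M => (M : ℝ)⁻¹) (p := e)
      (fun i _ => by positivity)
      (by simp [Finset.sum_const, hMne])
      (fun i _ => Real.exp_pos _)
    simp only [smul_eq_mul] at hJ
    have hleft : ∑ i : Fin M, (M : ℝ)⁻¹ * Real.log (e i)
        = (M : ℝ)⁻¹ * ∑ i : Fin M, (⟪f q.1.1, f (q.2 i)⟫ : ℝ) / τ := by
      rw [Finset.mul_sum]
      refine Finset.sum_congr rfl fun i _ => ?_
      rw [he]; simp [Real.log_exp]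
    have hsumpos : (0:ℝ) < ∑ i : Fin M, e i := by
      apply Finset.sum_pos (fun i _ => Real.exp_pos _)
      exact Finset.univ_nonempty_iff.2 (Fin.pos_iff_nonempty.1 (by omega))
    have hright : Real.log (∑ i : Fin M, (M : ℝ)⁻¹ * e i)
        ≤ Real.log (D q) + Real.log (1 / M) := by
      have h1 : ∑ i : Fin M, (M : ℝ)⁻¹ * e i = (M : ℝ)⁻¹ * ∑ i : Fin M, e i := by
        rw [Finset.mul_sum]
      rw [h1, Real.log_mul (by positivity) (ne_of_gt hsumpos)]
      have h2 : Real.log (∑ i : Fin M, e i) ≤ Real.log (D q) := by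
        apply Real.log_le_log hsumpos
        exact le_add_of_nonneg_left (Real.exp_pos _).le
      have h3 : Real.log (M : ℝ)⁻¹ = Real.log (1 / M) := by rw [one_div]
      linarith
    calc (M : ℝ)⁻¹ * ∑ i : Fin M, (⟪f q.1.1, f (q.2 i)⟫ : ℝ) / τ
        = ∑ i : Fin M, (M : ℝ)⁻¹ * Real.log (e i) := hleft.symm
      _ ≤ Real.log (∑ i : Fin M, (M : ℝ)⁻¹ * e i) := hJ
      _ ≤ Real.log (D q) + Real.log (1 / M) := hright
  -- integrability of the averaged sum
  have hInth : Integrable (fun q : (X × X) × (Fin M → X) =>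
      (M : ℝ)⁻¹ * ∑ i : Fin M, (⟪f q.1.1, f (q.2 i)⟫ : ℝ) / τ) μ := by
    exact ((integrable_finset_sum Finset.univ fun i _ => (hIntI i).div_const τ).const_mul _)
  -- integral of the averaged sum
  have hInteq : ∫ q, (M : ℝ)⁻¹ * ∑ i : Fin M, (⟪f q.1.1, f (q.2 i)⟫ : ℝ) / τ ∂μ
      = τ⁻¹ * B := by
    rw [integral_const_mul]
    rw [integral_finset_sum Finset.univ fun i _ => (hIntI i).div_const τ]
    have : ∀ i : Fin M, ∫ q, (⟪f q.1.1, f (q.2 i)⟫ : ℝ) / τ ∂μ = B / τ := by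
      intro i
      rw [integral_div, hIeq i]
    rw [Finset.sum_congr rfl fun i _ => this i]
    rw [Finset.sum_const, Finset.card_univ, Fintype.card_fin, nsmul_eq_mul]
    field_simp
  -- key inequality
  have key : τ⁻¹ * B ≤ (∫ q, Real.log (D q) ∂μ) + Real.log (1 / M) := by
    rw [← hInteq]
    have h1 : ∫ q, (M : ℝ)⁻¹ * ∑ i : Fin M, (⟪f q.1.1, f (q.2 i)⟫ : ℝ) / τ ∂μ
        ≤ ∫ q, (Real.log (D q) + Real.log (1 / M)) ∂μ :=
      integral_mono hInth (hIntg.add (integrable_const _)) hpt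
    rwa [integral_add hIntg (integrable_const _), integral_const, probReal_univ,
      one_smul] at h1
  have hAτ : ∫ p, (⟪f p.1, f p.2⟫ : ℝ) / τ ∂Pplus = A / τ := by
    rw [integral_div]
  constructor
  · rw [hAτ]
    have h2 := mul_le_mul_of_nonneg_left key hlam
    have : τ⁻¹ * (-A + lam * B) = -(A / τ) + lam * (τ⁻¹ * B) := by
      field_simp
    rw [this]
    linarith [h2]
  · -- rewrite the log of the quotient
    have hlogdiv : ∀ q : (X × X) × (Fin M → X),
        Real.log (Real.exp ((⟪f q.1.1, f q.1.2⟫ : ℝ) / τ) / D q)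
          = (⟪f q.1.1, f q.1.2⟫ : ℝ) / τ - Real.log (D q) := fun q => by
      rw [Real.log_div (Real.exp_ne_zero _) (ne_of_gt (hDpos q)), Real.log_exp]
    have hIntlogdiv : ∫ q, Real.log (Real.exp ((⟪f q.1.1, f q.1.2⟫ : ℝ) / τ) / D q) ∂μ
        = (∫ q, (⟪f q.1.1, f q.1.2⟫ : ℝ) / τ ∂μ) - ∫ q, Real.log (D q) ∂μ := by
      rw [← integral_sub hIntpos hIntg]
      exact integral_congr_ae (Filter.Eventually.of_forall fun q => hlogdiv q)
    have hfstint : ∫ q, (⟪f q.1.1, f q.1.2⟫ : ℝ) / τ ∂μ = A / τ := by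
      rw [hμdef, MeasureTheory.integral_prod _ (by rwa [← hμdef])]
      simp only [integral_const, probReal_univ, one_smul]
      exact hAτ
    show τ⁻¹ * (-A + 1 * B) ≤
      -(∫ q, Real.log (Real.exp ((⟪f q.1.1, f q.1.2⟫ : ℝ) / τ) / D q) ∂μ) + Real.log (1 / M)
    rw [hIntlogdiv, hfstint]
    have : τ⁻¹ * (-A + 1 * B) = -(A / τ) + τ⁻¹ * B := by field_simp
    rw [this]
    linarith [key]
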